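/- Let r ≥ 3 be an integer, let G be a finite simple graph, and let b be a natural number. Then G has a vertex cover of size at most b if and only if there exists a set Y of vertices of G'_r with |Y| ≤ b such that G'_r − Y contains no clique on r vertices (i.e., G'_r − Y is K_r-free). -/

import Mathlib

/-- The graph `G'_r`, obtained from `G` by replacing each edge by an `r`-clique:
for each edge `e = {u,v}` of `G` add `r - 2` new vertices `D_e` (pairwise disjoint for
distinct edges) and all edges so that `{u, v} ∪ D_e` induces a clique on `r` vertices;
the original edges are kept. -/
def cliqueRep (r : ℕ) {α : Type*} (G : SimpleGraph α) :
    SimpleGraph (α ⊕ (↥G.edgeSet × Fin (r - 2))) :=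
  SimpleGraph.fromRel fun x y =>
    match x, y with
    | Sum.inl a, Sum.inl b => G.Adj a b
    | Sum.inl a, Sum.inr (e, _) => a ∈ (e : Sym2 α)
    | Sum.inr (e, i), Sum.inr (e', i') => e = e' ∧ i ≠ i'
    | _, _ => False

section helpers
variable {r : ℕ} {α : Type*} {G : SimpleGraph α}

lemma adj_inl_inl {u v : α} (h : (cliqueRep r G).Adj (Sum.inl u) (Sum.inl v)) : G.Adj u v := by
  simp only [cliqueRep, SimpleGraph.fromRel_adj] at h
  exact h.2.elim id fun h' => h'.symm

lemma adj_inl_inr {a : α} {e : ↥G.edgeSet} {i : Fin (r-2)}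
    (h : (cliqueRep r G).Adj (Sum.inl a) (Sum.inr (e, i))) : a ∈ (e : Sym2 α) := by
  simp only [cliqueRep, SimpleGraph.fromRel_adj] at h
  exact h.2.elim id (fun h' => h'.elim)

lemma adj_inr_inr {e e' : ↥G.edgeSet} {i i' : Fin (r-2)}
    (h : (cliqueRep r G).Adj (Sum.inr (e, i)) (Sum.inr (e', i'))) : e = e' ∧ i ≠ i' := by
  simp only [cliqueRep, SimpleGraph.fromRel_adj] at h
  rcases h.2 with ⟨rfl, hi⟩ | ⟨rfl, hi⟩
  · exact ⟨rfl, hi⟩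
  · exact ⟨rfl, fun hh => hi hh.symm⟩

lemma adj_mk_ll {u v : α} (h : G.Adj u v) : (cliqueRep r G).Adj (Sum.inl u) (Sum.inl v) :=
  SimpleGraph.fromRel_adj .. |>.mpr ⟨by simp [h.ne], Or.inl h⟩

lemma adj_mk_lr {a : α} {e : ↥G.edgeSet} {i : Fin (r-2)} (h : a ∈ (e : Sym2 α)) :
    (cliqueRep r G).Adj (Sum.inl a) (Sum.inr (e, i)) :=
  SimpleGraph.fromRel_adj .. |>.mpr ⟨by simp, Or.inl h⟩

lemma adj_mk_rr {e : ↥G.edgeSet} {i i' : Fin (r-2)} (h : i ≠ i') :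
    (cliqueRep r G).Adj (Sum.inr (e, i)) (Sum.inr (e, i')) :=
  SimpleGraph.fromRel_adj .. |>.mpr ⟨by simp [h], Or.inl ⟨rfl, h⟩⟩

lemma notCliqueFree_of_subset {V : Type*} {H : SimpleGraph V} {n : ℕ} {s : Finset V}
    {A : Set V} (hsub : ∀ x ∈ s, x ∈ A) (h : H.IsNClique n s) :
    ¬ (H.induce A).CliqueFree n := by
  intro hcf
  refine hcf (s.attach.map ⟨fun x => (⟨x.1, hsub x.1 x.2⟩ : A),
    fun a b hab => Subtype.ext (by simpa using congrArg Subtype.val hab)⟩) ⟨?_, by simp [h.2]⟩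
  intro a ha b hb hne
  simp only [Finset.coe_map, Set.mem_image, Finset.mem_coe, Finset.mem_attach] at ha hb
  obtain ⟨x, _, rfl⟩ := ha
  obtain ⟨y, _, rfl⟩ := hb
  simp only [Function.Embedding.coeFn_mk, SimpleGraph.comap_adj]
  exact h.1 x.2 y.2 (fun hh => hne (by simp; exact Subtype.ext hh))

lemma isNClique_map_of_induce {V : Type*} {H : SimpleGraph V} {n : ℕ} {A : Set V}
    {t : Finset ↥A} (h : (H.induce A).IsNClique n t) :
    H.IsNClique n (t.map (Function.Embedding.subtype _)) := by
  constructor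
  · intro a ha b hb hne
    simp only [Finset.coe_map, Set.mem_image, Finset.mem_coe,
      Function.Embedding.coe_subtype] at ha hb
    obtain ⟨x, hx, rfl⟩ := ha
    obtain ⟨y, hy, rfl⟩ := hb
    have := h.1 hx hy (fun hh => hne (by rw [hh]))
    simpa using this
  · simp [h.2]

lemma exists_adj_inl (hr : 3 ≤ r) {s : Finset (α ⊕ (↥G.edgeSet × Fin (r-2)))}
    (h : (cliqueRep r G).IsNClique r s) :
    ∃ u v, G.Adj u v ∧ Sum.inl u ∈ s ∧ Sum.inl v ∈ s := by
  classical
  by_cases hc : ∃ e i, Sum.inr (e, i) ∈ s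
  · obtain ⟨e, i, hei⟩ := hc
    have hinr : ∀ x ∈ s, ∀ e' i', x = Sum.inr (e', i') → e' = e := by
      rintro x hx e' i' rfl
      by_cases hxe : (Sum.inr (e', i') : α ⊕ (↥G.edgeSet × Fin (r-2))) = Sum.inr (e, i)
      · exact (Prod.mk.injEq .. ▸ (Sum.inr.injEq .. ▸ hxe)).1
      · exact (adj_inr_inr (h.1 hx hei hxe)).1
    set T := s.filter (fun x => ¬ x.isLeft = true) with hT
    have hTrep : ∀ x ∈ T, ∃ j : Fin (r-2), x = Sum.inr (e, j) := by
      intro x hx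
      rw [hT, Finset.mem_filter] at hx
      match x, hx with
      | Sum.inl a, hx => simp at hx
      | Sum.inr (e', j), hx =>
        exact ⟨j, by rw [hinr _ hx.1 e' j rfl]⟩
    have hTcard : T.card ≤ r - 2 := by
      have := Finset.card_le_card_of_injOn (s := T) (t := (Finset.univ : Finset (Fin (r-2))))
        (fun x : α ⊕ (↥G.edgeSet × Fin (r-2)) =>
          match x with | Sum.inr (_, j) => j | Sum.inl _ => i)
        (fun a _ => Finset.mem_univ _) ?_
      · simpa using this
      · intro x hx y hy hxy
        obtain ⟨j, rfl⟩ := hTrep x hx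
        obtain ⟨j', rfl⟩ := hTrep y hy
        simp only at hxy
        rw [hxy]
    have hL : 2 ≤ (s.filter (fun x => x.isLeft)).card := by
      have hkey := Finset.card_filter_add_card_filter_not (s := s)
        (p := fun x => x.isLeft = true)
      have hs := h.2
      rw [← hT] at hkey
      omega
    obtain ⟨x, hx, y, hy, hne⟩ := Finset.one_lt_card.mp hL
    rw [Finset.mem_filter] at hx hy
    obtain ⟨u, rfl⟩ := Sum.isLeft_iff.mp hx.2
    obtain ⟨v, rfl⟩ := Sum.isLeft_iff.mp hy.2
    have hu : u ∈ (e : Sym2 α) := adj_inl_inr (h.1 hx.1 hei (by simp))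
    have hv : v ∈ (e : Sym2 α) := adj_inl_inr (h.1 hy.1 hei (by simp))
    have huv : u ≠ v := fun hh => hne (by rw [hh])
    have he : (e : Sym2 α) = s(u, v) := (Sym2.mem_and_mem_iff huv).mp ⟨hu, hv⟩
    refine ⟨u, v, ?_, hx.1, hy.1⟩
    have := e.2
    rw [he] at this
    exact this
  · push_neg at hc
    have h2 : 1 < s.card := by rw [h.2]; omega
    obtain ⟨x, hx, y, hy, hne⟩ := Finset.one_lt_card.mp h2
    match x, y with
    | Sum.inr (e, i), _ => exact absurd hx (hc e i)
    | Sum.inl u, Sum.inr (e, i) => exact absurd hy (hc e i)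
    | Sum.inl u, Sum.inl v =>
      exact ⟨u, v, adj_inl_inl (h.1 hx hy hne), hx, hy⟩

end helpers

/-- For `r ≥ 3`, a finite graph `G` and `b : ℕ`: `G` has a vertex cover
of size at most `b` iff there is a set `Y` of vertices of `G'_r` with `|Y| ≤ b` such that
`G'_r − Y` is `K_r`-free. -/
theorem stmt_15 (r : ℕ) (hr : 3 ≤ r) {α : Type*} [Fintype α] (G : SimpleGraph α)
    (b : ℕ) :
    (∃ C : Set α, (∀ ⦃x y : α⦄, G.Adj x y → x ∈ C ∨ y ∈ C) ∧ C.ncard ≤ b) ↔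
    (∃ Y : Set (α ⊕ (↥G.edgeSet × Fin (r - 2))),
      Y.ncard ≤ b ∧ ((cliqueRep r G).induce Yᶜ).CliqueFree r) := by
  classical
  constructor
  · rintro ⟨C, hC, hCb⟩
    refine ⟨Sum.inl '' C, ?_, ?_⟩
    · rw [Set.ncard_image_of_injective _ Sum.inl_injective]; exact hCb
    · intro t ht
      obtain ⟨u, v, huv, hu, hv⟩ := exists_adj_inl hr (isNClique_map_of_induce ht)
      simp only [Finset.mem_map, Function.Embedding.coe_subtype] at hu hv
      obtain ⟨w, _, hw⟩ := hu
      obtain ⟨w', _, hw'⟩ := hv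
      rcases hC huv with hm | hm
      · have hin : (Sum.inl u : α ⊕ (↥G.edgeSet × Fin (r-2))) ∈ Sum.inl '' C := Set.mem_image_of_mem _ hm
        rw [← hw] at hin
        exact w.2 hin
      · have hin : (Sum.inl v : α ⊕ (↥G.edgeSet × Fin (r-2))) ∈ Sum.inl '' C := Set.mem_image_of_mem _ hm
        rw [← hw'] at hin
        exact w'.2 hin
  · rintro ⟨Y, hYb, hcf⟩
    have hmem : ∀ z : Sym2 α, ∃ a, a ∈ z := fun z =>
      Sym2.inductionOn z fun a b => ⟨a, by simp⟩
    set f : (α ⊕ (↥G.edgeSet × Fin (r - 2))) → α := fun x =>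
      match x with
      | Sum.inl a => a
      | Sum.inr (e, _) => (hmem (e : Sym2 α)).choose with hf
    refine ⟨f '' Y, ?_, le_trans (Set.ncard_image_le Y.toFinite) hYb⟩
    intro x y hxy
    set e0 : ↥G.edgeSet := ⟨s(x, y), G.mem_edgeSet.mpr hxy⟩ with he0
    set S : Finset (α ⊕ (↥G.edgeSet × Fin (r - 2))) :=
      insert (Sum.inl x) (insert (Sum.inl y)
        ((Finset.univ : Finset (Fin (r-2))).image fun i => Sum.inr (e0, i))) with hS
    have hclique : (cliqueRep r G).IsNClique r S := by
      constructor
      · intro a ha b hb hne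
        simp only [hS, Finset.coe_insert, Set.mem_insert_iff, Finset.coe_image,
          Finset.coe_univ, Set.image_univ, Set.mem_range] at ha hb
        rcases ha with rfl | rfl | ⟨i, rfl⟩ <;> rcases hb with rfl | rfl | ⟨j, rfl⟩
        · exact absurd rfl hne
        · exact adj_mk_ll hxy
        · exact adj_mk_lr (by rw [he0]; simp)
        · exact (adj_mk_ll hxy).symm
        · exact absurd rfl hne
        · exact adj_mk_lr (by rw [he0]; simp)
        · exact (adj_mk_lr (by rw [he0]; simp)).symm
        · exact (adj_mk_lr (by rw [he0]; simp)).symm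
        · exact adj_mk_rr (fun hh => hne (by rw [hh]))
      · rw [hS]
        have h1 : ((Finset.univ : Finset (Fin (r-2))).image
            fun i => (Sum.inr (e0, i) : α ⊕ (↥G.edgeSet × Fin (r - 2)))).card = r - 2 := by
          rw [Finset.card_image_of_injective _ (fun i j hij => by
            simpa using hij)]
          simp
        rw [Finset.card_insert_of_notMem (by simp [hxy.ne]),
          Finset.card_insert_of_notMem (by simp), h1]
        omega
    by_cases hsub : ∀ z ∈ S, z ∈ Yᶜ
    · exact absurd hcf (notCliqueFree_of_subset hsub hclique)
    · push_neg at hsub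
      obtain ⟨z, hzS, hzY⟩ := hsub
      rw [Set.notMem_compl_iff] at hzY
      simp only [hS, Finset.mem_insert, Finset.mem_image, Finset.mem_univ, true_and] at hzS
      rcases hzS with rfl | rfl | ⟨i, rfl⟩
      · exact Or.inl ⟨_, hzY, rfl⟩
      · exact Or.inr ⟨_, hzY, rfl⟩
      · have hch := (hmem (e0 : Sym2 α)).choose_spec
        rw [he0] at hch
        simp only [Sym2.mem_iff] at hch
        rcases hch with hch | hch
        · exact Or.inl ⟨_, hzY, hch⟩
        · exact Or.inr ⟨_, hzY, hch⟩
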